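/- Let Φ satisfy Condition L with constant 𝒦 > 0, let h be a probability density on [0,1], let F_X be a probability measure on [0,1]^P, and let u, v : [0,1] × [0,1]^P → ℝ be bounded measurable functions. Then the F_X-integrated squared Hellinger distance between the tilted conditional densities satisfies H²(f_u, f_v) ≤ 𝒦² ‖u − v‖_∞² exp(𝒦 ‖u − v‖_∞). In fact the stronger pointwise-in-x bound holds: for every x, ∫₀¹ (√(f_u(y∣x)) − √(f_v(y∣x)))² dy ≤ 𝒦² ‖u − v‖_∞² exp(𝒦 ‖u − v‖_∞). -/

import Mathlib

open MeasureTheory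

set_option maxHeartbeats 2000000

section aux

variable {Φ φ : ℝ → ℝ} {𝒦 : ℝ}

/-- Under Condition L, `Φ a ≤ Φ b * exp (𝒦 * |a - b|)`. -/
lemma phi_ratio_bound (h𝒦 : 0 < 𝒦) (hderiv : ∀ x, HasDerivAt Φ (φ x) x)
    (hmono : StrictMono Φ) (h01 : ∀ x, 0 < Φ x ∧ Φ x < 1)
    (hratio : ∀ x, φ x / Φ x ≤ 𝒦) (a b : ℝ) :
    Φ a ≤ Φ b * Real.exp (𝒦 * |a - b|) := by
  -- derivative of Φ is nonnegative
  have hφ0 : ∀ t, 0 ≤ φ t := by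
    intro t
    have hslope : Filter.Tendsto (slope Φ t) (nhdsWithin t (Set.Ioi t)) (nhds (φ t)) :=
      (hasDerivAt_iff_tendsto_slope.1 (hderiv t)).mono_left
        (nhdsWithin_mono t fun y hy => ne_of_gt hy)
    refine ge_of_tendsto hslope ?_
    filter_upwards [self_mem_nhdsWithin] with y hy
    rw [slope_def_field]
    have h1 : Φ t < Φ y := hmono hy
    have h2 : t < y := hy
    exact div_nonneg (by linarith) (by linarith)
  -- log ∘ Φ is 𝒦-Lipschitz
  have hlog : LipschitzWith (NNReal.mk 𝒦 h𝒦.le) fun t => Real.log (Φ t) := by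
    apply lipschitzWith_of_nnnorm_deriv_le
    · exact fun t => ((hderiv t).log (h01 t).1.ne').differentiableAt
    · intro t
      have hd : deriv (fun t => Real.log (Φ t)) t = φ t / Φ t :=
        ((hderiv t).log (h01 t).1.ne').deriv
      rw [← NNReal.coe_le_coe, coe_nnnorm, hd, Real.norm_eq_abs, NNReal.coe_mk]
      rw [abs_le]
      constructor
      · have : 0 ≤ φ t / Φ t := div_nonneg (hφ0 t) (h01 t).1.le
        linarith
      · exact hratio t
  have hd := hlog.dist_le_mul a b
  rw [Real.dist_eq, Real.dist_eq, NNReal.coe_mk] at hd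
  have h1 : Real.log (Φ a) ≤ Real.log (Φ b) + 𝒦 * |a - b| := by
    have := abs_le.1 hd
    linarith [this.2]
  calc Φ a = Real.exp (Real.log (Φ a)) := (Real.exp_log (h01 a).1).symm
    _ ≤ Real.exp (Real.log (Φ b) + 𝒦 * |a - b|) := Real.exp_le_exp.2 h1
    _ = Φ b * Real.exp (𝒦 * |a - b|) := by
        rw [Real.exp_add, Real.exp_log (h01 b).1]

/-- `(exp t - 1)^2 ≤ 4 t^2 exp (2t)` specialization: `(√(exp d) - 1)^2 ≤ d^2 exp d`
for `d ≥ 0`. -/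
lemma sqrt_exp_sub_one_sq_le {d : ℝ} (hd : 0 ≤ d) :
    (Real.sqrt (Real.exp d) - 1) ^ 2 ≤ d ^ 2 * Real.exp d := by
  rw [← Real.exp_half]
  have h1 : Real.exp (d / 2) - 1 ≤ (d / 2) * Real.exp (d / 2) := by
    have h2 : 1 - d / 2 ≤ Real.exp (-(d / 2)) := by
      have := Real.add_one_le_exp (-(d / 2))
      linarith
    have hin : Real.exp (-(d / 2)) * Real.exp (d / 2) = 1 := by
      rw [← Real.exp_add]; simp
    have h2' : (1 - d / 2) * Real.exp (d / 2) ≤ 1 :=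
      calc (1 - d / 2) * Real.exp (d / 2) ≤ Real.exp (-(d / 2)) * Real.exp (d / 2) :=
            mul_le_mul_of_nonneg_right h2 (Real.exp_pos _).le
        _ = 1 := hin
    nlinarith
  have h0 : 0 ≤ Real.exp (d / 2) - 1 := by
    have : (1:ℝ) ≤ Real.exp (d / 2) := Real.one_le_exp (by linarith)
    linarith
  have h4 : Real.exp (d / 2) * Real.exp (d / 2) = Real.exp d := by
    rw [← Real.exp_add]; ring_nf
  nlinarith [Real.exp_pos (d / 2), sq_nonneg (d / 2 * Real.exp (d / 2))]

end aux


set_option maxHeartbeats 2000000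

/-- Core Hellinger bound for unnormalized densities whose ratio is bounded by `c`. -/
lemma hellinger_core {μ : Measure ℝ} {p q : ℝ → ℝ} {c : ℝ} (hc : 1 ≤ c)
    (hp : Integrable p μ) (hq : Integrable q μ)
    (hp0 : ∀ y, 0 ≤ p y) (hq0 : ∀ y, 0 ≤ q y)
    (hpq : ∀ᵐ y ∂μ, p y ≤ c * q y) (hqp : ∀ᵐ y ∂μ, q y ≤ c * p y)
    (hP : 0 < ∫ t, p t ∂μ) (hQ : 0 < ∫ t, q t ∂μ) :
    ∫ y, (Real.sqrt (p y / ∫ t, p t ∂μ) - Real.sqrt (q y / ∫ t, q t ∂μ)) ^ 2 ∂μ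
      ≤ (Real.sqrt c - 1) ^ 2 := by
  set P := ∫ t, p t ∂μ with hPdef
  set Q := ∫ t, q t ∂μ with hQdef
  have hsP : 0 < Real.sqrt P := Real.sqrt_pos.2 hP
  have hsQ : 0 < Real.sqrt Q := Real.sqrt_pos.2 hQ
  set sP := Real.sqrt P
  set sQ := Real.sqrt Q
  have hs : 0 < sP * sQ := mul_pos hsP hsQ
  have hPsq : sP ^ 2 = P := Real.sq_sqrt hP.le
  have hQsq : sQ ^ 2 = Q := Real.sq_sqrt hQ.le
  set K := (Real.sqrt c - 1) ^ 2 with hKdef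
  have hk1 : (1:ℝ) ≤ Real.sqrt c := by
    rw [show (1:ℝ) = Real.sqrt 1 by simp]
    exact Real.sqrt_le_sqrt hc
  -- measurability of the sqrt difference
  have hsubm : AEStronglyMeasurable (fun y => Real.sqrt (p y) - Real.sqrt (q y)) μ :=
    (Real.continuous_sqrt.comp_aestronglyMeasurable hp.1).sub
      (Real.continuous_sqrt.comp_aestronglyMeasurable hq.1)
  have hrm : AEStronglyMeasurable (fun y => (Real.sqrt (p y) - Real.sqrt (q y)) ^ 2) μ := by
    exact (hsubm.mul hsubm).congr (Filter.Eventually.of_forall fun y => by simp [pow_two])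
  -- integrability of (√p - √q)^2
  have hr_int : Integrable (fun y => (Real.sqrt (p y) - Real.sqrt (q y)) ^ 2) μ := by
    refine (hp.add hq).mono' hrm (Filter.Eventually.of_forall fun y => ?_)
    have h1 : Real.sqrt (p y) ^ 2 = p y := Real.sq_sqrt (hp0 y)
    have h2 : Real.sqrt (q y) ^ 2 = q y := Real.sq_sqrt (hq0 y)
    have h3 : 0 ≤ Real.sqrt (p y) * Real.sqrt (q y) :=
      mul_nonneg (Real.sqrt_nonneg _) (Real.sqrt_nonneg _)
    rw [Real.norm_eq_abs, abs_of_nonneg (sq_nonneg _)]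
    simp only [Pi.add_apply]
    nlinarith
  set J := ∫ y, (Real.sqrt (p y) - Real.sqrt (q y)) ^ 2 ∂μ with hJdef
  have hJ0 : 0 ≤ J := integral_nonneg fun y => sq_nonneg _
  -- pointwise bound (√p-√q)^2 ≤ K * q and ≤ K * p  (a.e.)
  have key : ∀ a b : ℝ, 0 ≤ a → 0 ≤ b → a ≤ Real.sqrt c * b → b ≤ Real.sqrt c * a →
      (a - b) ^ 2 ≤ (Real.sqrt c - 1) ^ 2 * b ^ 2 := by
    intro a b ha0 hb0 hab hba
    have hk0 : (0:ℝ) < Real.sqrt c := lt_of_lt_of_le one_pos hk1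
    have hfac : 0 ≤ a + (Real.sqrt c - 2) * b := by
      nlinarith [mul_nonneg hb0 (sq_nonneg (Real.sqrt c - 1))]
    nlinarith [mul_nonneg (sub_nonneg.2 hab) hfac]
  have hptwise : ∀ y, p y ≤ c * q y → q y ≤ c * p y →
      (Real.sqrt (p y) - Real.sqrt (q y)) ^ 2 ≤ K * q y ∧
      (Real.sqrt (p y) - Real.sqrt (q y)) ^ 2 ≤ K * p y := by
    intro y h1 h2
    set a := Real.sqrt (p y)
    set b := Real.sqrt (q y)
    have ha0 : 0 ≤ a := Real.sqrt_nonneg _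
    have hb0 : 0 ≤ b := Real.sqrt_nonneg _
    have hab : a ≤ Real.sqrt c * b := by
      rw [← Real.sqrt_mul (by linarith : (0:ℝ) ≤ c)]
      exact Real.sqrt_le_sqrt h1
    have hba : b ≤ Real.sqrt c * a := by
      rw [← Real.sqrt_mul (by linarith : (0:ℝ) ≤ c)]
      exact Real.sqrt_le_sqrt h2
    have hpa : a ^ 2 = p y := Real.sq_sqrt (hp0 y)
    have hqb : b ^ 2 = q y := Real.sq_sqrt (hq0 y)
    constructor
    · rw [hKdef, ← hqb]
      exact key a b ha0 hb0 hab hba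
    · rw [hKdef, ← hpa]
      have := key b a hb0 ha0 hba hab
      nlinarith [this]
  have hJQ : J ≤ K * Q := by
    have := integral_mono_ae hr_int (hq.const_mul K) ?_
    · simpa [integral_const_mul] using this
    · filter_upwards [hpq, hqp] with y h1 h2
      exact (hptwise y h1 h2).1
  have hJP : J ≤ K * P := by
    have := integral_mono_ae hr_int (hp.const_mul K) ?_
    · simpa [integral_const_mul] using this
    · filter_upwards [hpq, hqp] with y h1 h2
      exact (hptwise y h1 h2).2
  have hK0 : 0 ≤ K := sq_nonneg _
  -- J ≤ K * sP * sQ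
  have hJs : J ≤ K * (sP * sQ) := by
    rcases le_total sP sQ with hle | hle
    · calc J ≤ K * P := hJP
        _ = K * (sP * sP) := by rw [← hPsq]; ring
        _ ≤ K * (sP * sQ) := by
            have := mul_le_mul_of_nonneg_left hle hsP.le
            nlinarith
    · calc J ≤ K * Q := hJQ
        _ = K * (sQ * sQ) := by rw [← hQsq]; ring
        _ ≤ K * (sP * sQ) := by
            have := mul_le_mul_of_nonneg_left hle hsQ.le
            nlinarith
  -- rewrite the integrand
  have alg : ∀ a b sp sq : ℝ, sp ≠ 0 → sq ≠ 0 →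
      (a / sp - b / sq) ^ 2
        = (1 / sp ^ 2 - 1 / (sp * sq)) * a ^ 2 + (1 / sq ^ 2 - 1 / (sp * sq)) * b ^ 2
          + (a - b) ^ 2 / (sp * sq) := by
    intro a b sp sq hsp hsq
    field_simp
    ring
  have hident : ∀ y, (Real.sqrt (p y / P) - Real.sqrt (q y / Q)) ^ 2
      = (1 / P - 1 / (sP * sQ)) * p y + (1 / Q - 1 / (sP * sQ)) * q y
        + (Real.sqrt (p y) - Real.sqrt (q y)) ^ 2 / (sP * sQ) := by
    intro y
    rw [Real.sqrt_div (hp0 y), Real.sqrt_div (hq0 y)]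
    have := alg (Real.sqrt (p y)) (Real.sqrt (q y)) sP sQ hsP.ne' hsQ.ne'
    rw [Real.sq_sqrt (hp0 y), Real.sq_sqrt (hq0 y), hPsq, hQsq] at this
    exact this
  -- compute the integral
  have hint_eq : ∫ y, (Real.sqrt (p y / P) - Real.sqrt (q y / Q)) ^ 2 ∂μ
      = (1 / P - 1 / (sP * sQ)) * P + (1 / Q - 1 / (sP * sQ)) * Q + J / (sP * sQ) := by
    rw [show (fun y => (Real.sqrt (p y / P) - Real.sqrt (q y / Q)) ^ 2)
        = fun y => (1 / P - 1 / (sP * sQ)) * p y + (1 / Q - 1 / (sP * sQ)) * q y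
          + (Real.sqrt (p y) - Real.sqrt (q y)) ^ 2 / (sP * sQ) from funext hident]
    have hi1 : Integrable (fun y =>
        (1 / P - 1 / (sP * sQ)) * p y + (1 / Q - 1 / (sP * sQ)) * q y) μ :=
      (hp.const_mul (1 / P - 1 / (sP * sQ))).add (hq.const_mul (1 / Q - 1 / (sP * sQ)))
    rw [integral_add hi1 (hr_int.div_const (sP * sQ)),
      integral_add (hp.const_mul (1 / P - 1 / (sP * sQ))) (hq.const_mul (1 / Q - 1 / (sP * sQ))),
      integral_const_mul, integral_const_mul, integral_div]
  rw [hint_eq]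
  clear hident alg hint_eq hptwise key hrm hsubm hr_int hJdef hPdef hQdef hKdef hpq hqp hp hq
  clear_value J K sP sQ P Q
  have hc2 : 2 * (sP * sQ) ≤ P + Q := by nlinarith [sq_nonneg (sP - sQ)]
  have hfin : (1 / P - 1 / (sP * sQ)) * P + (1 / Q - 1 / (sP * sQ)) * Q + J / (sP * sQ)
      = 2 - (P + Q) / (sP * sQ) + J / (sP * sQ) := by
    field_simp
    ring
  rw [hfin]
  have h1 : 2 ≤ (P + Q) / (sP * sQ) := by
    rw [le_div_iff₀ hs]; linarith
  have h2 : J / (sP * sQ) ≤ K := by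
    rw [div_le_iff₀ hs]; linarith [hJs]
  linarith


/-- **Hellinger distance bound for tilted conditional densities.**
If `Φ` satisfies Condition L with constant `𝒦 > 0`, `h` is a density on `[0,1]`, `F_X` is a
probability measure on `[0,1]^P`, and `u, v` are bounded (by `M` ≥ `‖u - v‖_∞`) measurable
functions, then the `F_X`-integrated squared Hellinger distance between the tilted conditional
densities `f_u, f_v` is at most `𝒦² M² exp(𝒦 M)`; in fact the bound holds pointwise in `x`. -/
theorem stmt7 (P : ℕ) (Φ φ : ℝ → ℝ) (𝒦 : ℝ) (h𝒦 : 0 < 𝒦)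
    (hderiv : ∀ x, HasDerivAt Φ (φ x) x)
    (hmono : StrictMono Φ)
    (h01 : ∀ x, 0 < Φ x ∧ Φ x < 1)
    (hratio : ∀ x, φ x / Φ x ≤ 𝒦)
    (h : ℝ → ℝ) (hh_meas : Measurable h) (hh_nonneg : ∀ y, 0 ≤ h y)
    (hh_int : (∫ y in Set.Icc (0:ℝ) 1, h y) = 1)
    (F : Measure (Fin P → ℝ)) [IsProbabilityMeasure F]
    (u v : ℝ → (Fin P → ℝ) → ℝ)
    (hu_meas : Measurable (Function.uncurry u))
    (hv_meas : Measurable (Function.uncurry v))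
    (M : ℝ)
    (hM : ∀ y ∈ Set.Icc (0:ℝ) 1, ∀ x ∈ Set.univ.pi fun _ : Fin P => Set.Icc (0:ℝ) 1,
        |u y x - v y x| ≤ M)
    (f : (ℝ → (Fin P → ℝ) → ℝ) → ℝ → (Fin P → ℝ) → ℝ)
    (hf : f = fun w y x => h y * Φ (w y x) / ∫ t in Set.Icc (0:ℝ) 1, h t * Φ (w t x)) :
    (∫ x in Set.univ.pi fun _ : Fin P => Set.Icc (0:ℝ) 1,
        (∫ y in Set.Icc (0:ℝ) 1, (Real.sqrt (f u y x) - Real.sqrt (f v y x)) ^ 2) ∂F)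
      ≤ 𝒦 ^ 2 * M ^ 2 * Real.exp (𝒦 * M) ∧
    ∀ x ∈ Set.univ.pi fun _ : Fin P => Set.Icc (0:ℝ) 1,
      (∫ y in Set.Icc (0:ℝ) 1, (Real.sqrt (f u y x) - Real.sqrt (f v y x)) ^ 2)
        ≤ 𝒦 ^ 2 * M ^ 2 * Real.exp (𝒦 * M) := by
  subst hf
  beta_reduce
  have hΦdiff : Differentiable ℝ Φ := fun t => (hderiv t).differentiableAt
  have hΦcont : Continuous Φ := hΦdiff.continuous
  have hΦmeas : Measurable Φ := hΦcont.measurable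
  set cube := Set.univ.pi fun _ : Fin P => Set.Icc (0:ℝ) 1 with hcube
  have hcubem : MeasurableSet cube := MeasurableSet.univ_pi fun _ => measurableSet_Icc
  have hM0 : 0 ≤ M := by
    have h0 : (0:ℝ) ∈ Set.Icc (0:ℝ) 1 := by norm_num
    have hx0 : (fun _ : Fin P => (0:ℝ)) ∈ cube := by
      intro i _; exact Set.mem_Icc.2 (by norm_num)
    exact le_trans (abs_nonneg _) (hM 0 h0 _ hx0)
  have hd0 : 0 ≤ 𝒦 * M := mul_nonneg h𝒦.le hM0
  have hc1 : (1:ℝ) ≤ Real.exp (𝒦 * M) := Real.one_le_exp hd0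
  have hh_intg : IntegrableOn h (Set.Icc (0:ℝ) 1) := by
    by_contra hcon
    rw [integral_undef hcon] at hh_int
    norm_num at hh_int
  -- facts for a fixed tilt function w with associated Φ density
  have hwfacts : ∀ (w : ℝ → (Fin P → ℝ) → ℝ), Measurable (Function.uncurry w) →
      ∀ x : Fin P → ℝ,
      IntegrableOn (fun y => h y * Φ (w y x)) (Set.Icc (0:ℝ) 1) ∧
      0 < ∫ y in Set.Icc (0:ℝ) 1, h y * Φ (w y x) := by
    intro w hw x
    have hwm : Measurable fun y => w y x := hw.comp measurable_prodMk_right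
    have hpm : Measurable fun y => h y * Φ (w y x) := hh_meas.mul (hΦmeas.comp hwm)
    have hp0 : ∀ y, 0 ≤ h y * Φ (w y x) :=
      fun y => mul_nonneg (hh_nonneg y) (h01 _).1.le
    have hp_int : IntegrableOn (fun y => h y * Φ (w y x)) (Set.Icc (0:ℝ) 1) := by
      refine hh_intg.mono' hpm.aestronglyMeasurable
        (Filter.Eventually.of_forall fun y => ?_)
      rw [Real.norm_eq_abs, abs_of_nonneg (hp0 y)]
      have h1 := (h01 (w y x)).2
      nlinarith [hh_nonneg y, (h01 (w y x)).1]
    refine ⟨hp_int, ?_⟩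
    have h0 : 0 ≤ ∫ y in Set.Icc (0:ℝ) 1, h y * Φ (w y x) :=
      integral_nonneg fun y => hp0 y
    rcases h0.lt_or_eq with hlt | heq
    · exact hlt
    · exfalso
      have hae := (integral_eq_zero_iff_of_nonneg (fun y => hp0 y) hp_int).1 heq.symm
      have hh0 : h =ᵐ[volume.restrict (Set.Icc (0:ℝ) 1)] 0 := by
        filter_upwards [hae] with y hy
        have hy' : h y * Φ (w y x) = 0 := hy
        have hΦpos := (h01 (w y x)).1
        have : h y = 0 := by
          by_contra hne
          have hhy : 0 < h y := lt_of_le_of_ne (hh_nonneg y) (Ne.symm hne)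
          nlinarith
        simpa using this
      have hzero : (∫ y in Set.Icc (0:ℝ) 1, h y) = 0 := by
        rw [integral_congr_ae hh0]
        simp
      rw [hh_int] at hzero
      norm_num at hzero
  -- the pointwise-in-x bound
  have key : ∀ x ∈ cube,
      (∫ y in Set.Icc (0:ℝ) 1,
        (Real.sqrt (h y * Φ (u y x) / ∫ t in Set.Icc (0:ℝ) 1, h t * Φ (u t x)) -
         Real.sqrt (h y * Φ (v y x) / ∫ t in Set.Icc (0:ℝ) 1, h t * Φ (v t x))) ^ 2)
        ≤ 𝒦 ^ 2 * M ^ 2 * Real.exp (𝒦 * M) := by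
    intro x hx
    obtain ⟨hu_int, hu_pos⟩ := hwfacts u hu_meas x
    obtain ⟨hv_int, hv_pos⟩ := hwfacts v hv_meas x
    have hp0 : ∀ y, 0 ≤ h y * Φ (u y x) :=
      fun y => mul_nonneg (hh_nonneg y) (h01 _).1.le
    have hq0 : ∀ y, 0 ≤ h y * Φ (v y x) :=
      fun y => mul_nonneg (hh_nonneg y) (h01 _).1.le
    have hratio2 : ∀ a b : ℝ, |a - b| ≤ M → Φ a ≤ Real.exp (𝒦 * M) * Φ b := by
      intro a b hab
      have h1 := phi_ratio_bound h𝒦 hderiv hmono h01 hratio a b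
      have h2 : Real.exp (𝒦 * |a - b|) ≤ Real.exp (𝒦 * M) :=
        Real.exp_le_exp.2 (mul_le_mul_of_nonneg_left hab h𝒦.le)
      calc Φ a ≤ Φ b * Real.exp (𝒦 * |a - b|) := h1
        _ ≤ Φ b * Real.exp (𝒦 * M) :=
            mul_le_mul_of_nonneg_left h2 (h01 b).1.le
        _ = Real.exp (𝒦 * M) * Φ b := by ring
    have hae1 : ∀ᵐ y ∂(volume.restrict (Set.Icc (0:ℝ) 1)),
        h y * Φ (u y x) ≤ Real.exp (𝒦 * M) * (h y * Φ (v y x)) := by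
      filter_upwards [ae_restrict_mem measurableSet_Icc] with y hy
      have := hratio2 (u y x) (v y x) (hM y hy x hx)
      nlinarith [hh_nonneg y]
    have hae2 : ∀ᵐ y ∂(volume.restrict (Set.Icc (0:ℝ) 1)),
        h y * Φ (v y x) ≤ Real.exp (𝒦 * M) * (h y * Φ (u y x)) := by
      filter_upwards [ae_restrict_mem measurableSet_Icc] with y hy
      have habs : |v y x - u y x| ≤ M := by
        rw [abs_sub_comm]; exact hM y hy x hx
      have := hratio2 (v y x) (u y x) habs
      nlinarith [hh_nonneg y]
    have hcore := hellinger_core (μ := volume.restrict (Set.Icc (0:ℝ) 1))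
      (p := fun y => h y * Φ (u y x)) (q := fun y => h y * Φ (v y x))
      hc1 hu_int hv_int hp0 hq0 hae1 hae2 hu_pos hv_pos
    refine le_trans hcore ?_
    have hfinal := sqrt_exp_sub_one_sq_le hd0
    calc (Real.sqrt (Real.exp (𝒦 * M)) - 1) ^ 2
        ≤ (𝒦 * M) ^ 2 * Real.exp (𝒦 * M) := hfinal
      _ = 𝒦 ^ 2 * M ^ 2 * Real.exp (𝒦 * M) := by ring
  refine ⟨?_, key⟩
  have hC : 0 ≤ 𝒦 ^ 2 * M ^ 2 * Real.exp (𝒦 * M) := by positivity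
  by_cases hint : IntegrableOn (fun x => ∫ y in Set.Icc (0:ℝ) 1,
      (Real.sqrt (h y * Φ (u y x) / ∫ t in Set.Icc (0:ℝ) 1, h t * Φ (u t x)) -
       Real.sqrt (h y * Φ (v y x) / ∫ t in Set.Icc (0:ℝ) 1, h t * Φ (v t x))) ^ 2) cube F
  · calc (∫ x in cube, (∫ y in Set.Icc (0:ℝ) 1,
          (Real.sqrt (h y * Φ (u y x) / ∫ t in Set.Icc (0:ℝ) 1, h t * Φ (u t x)) -
           Real.sqrt (h y * Φ (v y x) / ∫ t in Set.Icc (0:ℝ) 1, h t * Φ (v t x))) ^ 2) ∂F)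
        ≤ ∫ _x in cube, 𝒦 ^ 2 * M ^ 2 * Real.exp (𝒦 * M) ∂F :=
          setIntegral_mono_on hint
            (integrableOn_const (measure_ne_top _ _)) hcubem key
      _ = (F cube).toReal • (𝒦 ^ 2 * M ^ 2 * Real.exp (𝒦 * M)) := setIntegral_const _
      _ ≤ 𝒦 ^ 2 * M ^ 2 * Real.exp (𝒦 * M) := by
          rw [smul_eq_mul]
          have h1 : (F cube).toReal ≤ 1 := by
            have h2 : F cube ≤ 1 := prob_le_one
            have h3 := ENNReal.toReal_mono ENNReal.one_ne_top h2
            simpa using h3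
          nlinarith
  · rw [integral_undef hint]
    exact hC
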